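/- Let T be a theory in a language L and κ an infinite cardinal. The class of two-sorted structures (P, 𝔐, Π) such that 𝔐 ⊨ T, Π is a family of κ functions P → M, and for all a_1,…,a_n ∈ M, all distinct π_1,…,π_n ∈ Π, and all m ≥ 1 there exist at least m distinct elements p of P with π_i(p) = a_i for i = 1,…,n, is elementary and its theory is complete; consequently this theory equals D^κ(T), i.e. every such structure is elementarily equivalent to (M^κ, 𝔐, (π_i)_{i<κ}) for any 𝔐 ⊨ T. -/

import Mathlib

open FirstOrder Language Set Cardinal

namespace TracePaper

/-- First-order languages with symbols in `Type 0`. -/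
abbrev Lang := FirstOrder.Language.{0,0}

/-- A set is definable with parameters (i.e. over the full domain). -/
def Dfn (L : Lang) (M : Type) [L.Structure M] {α : Type} (s : Set (α → M)) : Prop :=
  Set.Definable (Set.univ : Set M) L s

/-- A set is definable without parameters. -/
def Dfn0 (L : Lang) (M : Type) [L.Structure M] {α : Type} (s : Set (α → M)) : Prop :=
  Set.Definable (∅ : Set M) L s

/-- `N` trace defines `M` via the injection `τ : M → N^n`. -/
def TraceVia (L₁ : Lang) (N : Type) [L₁.Structure N]
    (L₂ : Lang) (M : Type) [L₂.Structure M] {n : ℕ} (τ : M → Fin n → N) : Prop :=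
  ∀ (m : ℕ) (X : Set (Fin m → M)), Dfn L₂ M X →
    ∃ Y : Set (Fin m × Fin n → N), Dfn L₁ N Y ∧
      X = {a | (fun p : Fin m × Fin n => τ (a p.1) p.2) ∈ Y}

/-- The structure `N` trace defines the structure `M`. -/
def Traces (L₁ : Lang) (N : Type) [L₁.Structure N]
    (L₂ : Lang) (M : Type) [L₂.Structure M] : Prop :=
  ∃ (n : ℕ) (τ : M → Fin n → N), 0 < n ∧ Function.Injective τ ∧ TraceVia L₁ N L₂ M τ

/-- The collection `E` of functions witnesses local trace definability of `M` in `N`. -/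
def LocalWitness (L₁ : Lang) (N : Type) [L₁.Structure N]
    (L₂ : Lang) (M : Type) [L₂.Structure M] (E : Set (M → N)) : Prop :=
  ∀ (m : ℕ) (X : Set (Fin m → M)), Dfn L₂ M X →
    ∃ (d : ℕ) (τ : Fin d → M → N) (j : Fin d → Fin m) (Y : Set (Fin d → N)),
      (∀ t, τ t ∈ E) ∧ Dfn L₁ N Y ∧
      X = {a | (fun t => τ t (a (j t))) ∈ Y}

/-- The structure `N` locally trace defines the structure `M`. -/
def LocTraces (L₁ : Lang) (N : Type) [L₁.Structure N]
    (L₂ : Lang) (M : Type) [L₂.Structure M] : Prop :=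
  ∃ E : Set (M → N), LocalWitness L₁ N L₂ M E

/-- `N` locally trace defines `M` via (at most) `κ` functions. -/
def LocTracesVia (L₁ : Lang) (N : Type) [L₁.Structure N]
    (L₂ : Lang) (M : Type) [L₂.Structure M] (κ : Cardinal.{0}) : Prop :=
  ∃ E : Set (M → N), #E ≤ κ ∧ LocalWitness L₁ N L₂ M E

/-- The theory `T₁` trace defines the theory `T₂`: some model of `T₂` is trace
definable in some model of `T₁`. -/
def TTraces (L₁ : Lang) (T₁ : L₁.Theory) (L₂ : Lang) (T₂ : L₂.Theory) : Prop :=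
  ∃ (N : Type) (S₁ : L₁.Structure N) (M : Type) (S₂ : L₂.Structure M),
    Infinite N ∧ Infinite M ∧ @Theory.Model L₁ N S₁ T₁ ∧ @Theory.Model L₂ M S₂ T₂ ∧
      @Traces L₁ N S₁ L₂ M S₂

/-- Trace equivalence of theories. -/
def TTraceEquiv (L₁ : Lang) (T₁ : L₁.Theory) (L₂ : Lang) (T₂ : L₂.Theory) :
    Prop :=
  TTraces L₁ T₁ L₂ T₂ ∧ TTraces L₂ T₂ L₁ T₁

/-- The theory `T₁` locally trace defines the theory `T₂`. -/
def TLocTraces (L₁ : Lang) (T₁ : L₁.Theory) (L₂ : Lang) (T₂ : L₂.Theory) :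
    Prop :=
  ∃ (N : Type) (S₁ : L₁.Structure N) (M : Type) (S₂ : L₂.Structure M),
    Infinite N ∧ Infinite M ∧ @Theory.Model L₁ N S₁ T₁ ∧ @Theory.Model L₂ M S₂ T₂ ∧
      @LocTraces L₁ N S₁ L₂ M S₂

/-- The theory `T₁` locally trace defines the theory `T₂` via at most `κ` functions. -/
def TLocTracesVia (L₁ : Lang) (T₁ : L₁.Theory) (L₂ : Lang) (T₂ : L₂.Theory)
    (κ : Cardinal.{0}) : Prop :=
  ∃ (N : Type) (S₁ : L₁.Structure N) (M : Type) (S₂ : L₂.Structure M),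
    Infinite N ∧ Infinite M ∧ @Theory.Model L₁ N S₁ T₁ ∧ @Theory.Model L₂ M S₂ T₂ ∧
      @LocTracesVia L₁ N S₁ L₂ M S₂ κ

/-- Local trace equivalence of theories. -/
def TLocTraceEquiv (L₁ : Lang) (T₁ : L₁.Theory) (L₂ : Lang)
    (T₂ : L₂.Theory) : Prop :=
  TLocTraces L₁ T₁ L₂ T₂ ∧ TLocTraces L₂ T₂ L₁ T₁

/-- A theory is trace maximal if it trace defines every (infinite) structure. -/
def TraceMaximal (L₁ : Lang) (T₁ : L₁.Theory) : Prop :=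
  ∀ (L₂ : Lang) (M : Type) (S₂ : L₂.Structure M), Infinite M →
    TTraces L₁ T₁ L₂ (@Language.completeTheory L₂ M S₂)

section DLang

/-- The relational language coding the function symbols of `L`: an `n`-ary function symbol
becomes an `(n+1)`-ary relation symbol (its graph). -/
def funRelLang (L : Lang) : Lang where
  Functions := fun _ => Empty
  Relations := fun n => match n with
    | 0 => Empty
    | (m+1) => L.Functions m

/-- The language consisting of the relation symbols of `L`. -/
def relLang (L : Lang) : Lang where
  Functions := fun _ => Empty
  Relations := L.Relations

/-- The language with a unary sort predicate (for the first sort `P`) and a binary relation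
symbol for (the graph of) each projection `π_i`, `i : ι`. -/
def projLang (ι : Type) : Lang where
  Functions := fun _ => Empty
  Relations := fun n => match n with
    | 1 => Unit
    | 2 => ι
    | _ => Empty

/-- The (relational) one-sorted language coding the two-sorted structures
`(P, 𝔐, (π_i)_{i : ι})`. -/
def DLang (L : Lang) (ι : Type) : Lang :=
  (funRelLang L).sum ((relLang L).sum (projLang ι))

variable {L : Lang} {ι P M : Type}

/-- Interpretation of the graph-relations of the function symbols of `L` on `P ⊕ M`. -/
def funRelInterp (L : Lang) (P M : Type) [L.Structure M] :
    ∀ {n : ℕ}, (funRelLang L).Relations n → (Fin n → P ⊕ M) → Prop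
  | 0, r, _ => Empty.elim r
  | (m+1), g, x =>
      ∃ a : Fin m → M, (∀ i : Fin m, x i.castSucc = Sum.inr (a i)) ∧
        x (Fin.last m) = Sum.inr (Structure.funMap g a)

/-- Interpretation of the sort predicate and the projection graphs on `P ⊕ M`. -/
def projInterp (π : ι → P → M) :
    ∀ {n : ℕ}, (projLang ι).Relations n → (Fin n → P ⊕ M) → Prop
  | 0, r, _ => Empty.elim r
  | 1, _, x => ∃ p : P, x 0 = Sum.inl p
  | 2, i, x => ∃ p : P, x 0 = Sum.inl p ∧ x 1 = Sum.inr (π i p)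
  | (_+3), r, _ => Empty.elim r

/-- The one-sorted structure on `P ⊕ M` coding the two-sorted structure `(P, 𝔐, (π_i))`. -/
def dStructure (L : Lang) (ι P M : Type) [L.Structure M] (π : ι → P → M) :
    (DLang L ι).Structure (P ⊕ M) where
  funMap := fun {_} f _ => (Sum.elim Empty.elim (Sum.elim Empty.elim Empty.elim)) f
  RelMap := fun {n} r x =>
    Sum.elim (fun g => funRelInterp L P M g x)
      (Sum.elim
        (fun s => ∃ a : Fin n → M, (∀ i, x i = Sum.inr (a i)) ∧
          Structure.RelMap (L := L) (M := M) (show L.Relations n from s) a)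
        (fun t => projInterp π t x)) r

/-- The canonical structure coding `(M^ι, 𝔐, (π_i)_{i : ι})`. -/
def canonD (L : Lang) (ι M : Type) [L.Structure M] :
    (DLang L ι).Structure ((ι → M) ⊕ M) :=
  dStructure L ι (ι → M) M (fun i x => x i)

/-- The theory `D^κ(T)` where `κ = #ι` and `T = Th(M)`: the complete theory of the
(coded) two-sorted structure `(M^ι, 𝔐, (π_i)_{i : ι})`. -/
def DTheory (L : Lang) (ι M : Type) [L.Structure M] : (DLang L ι).Theory :=
  @Language.completeTheory (DLang L ι) ((ι → M) ⊕ M) (canonD L ι M)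

/-- The genericity axioms for `(P, 𝔐, (π_i))`: any finite, pairwise-distinctly-indexed
tuple of values is realized by at least `m` elements of `P`, for every `m`. -/
def Generic {ι P M : Type} (π : ι → P → M) : Prop :=
  ∀ (n : ℕ) (idx : Fin n → ι), Function.Injective idx →
    ∀ (a : Fin n → M) (m : ℕ), ∃ S : Finset P, m ≤ S.card ∧
      ∀ p ∈ S, ∀ k : Fin n, π (idx k) p = a k

end DLang

section OldAPI

variable {L' : Lang}

/-- Universal quantification over the variables sent to `Sum.inr` by `f`. -/
noncomputable def oIAlls {α β γ : Type} [Finite γ] (f : α → β ⊕ γ) (φ : L'.Formula α) :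
    L'.Formula β :=
  Formula.iAlls γ (φ.relabel f)

/-- Existential quantification over the variables sent to `Sum.inr` by `f`. -/
noncomputable def oIExs {α β γ : Type} [Finite γ] (f : α → β ⊕ γ) (φ : L'.Formula α) :
    L'.Formula β :=
  Formula.iExs γ (φ.relabel f)

/-- Conjunction over a finset. -/
noncomputable def oIInf {α β : Type} {n : ℕ} (s : Finset β) (f : β → L'.BoundedFormula α n) :
    L'.BoundedFormula α n :=
  (s.toList.map f).foldr (· ⊓ ·) ⊤

lemma realize_oIAlls {M : Type*} [L'.Structure M] {α β γ : Type} [Finite γ] {f : α → β ⊕ γ}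
    {φ : L'.Formula α} {v : β → M} :
    (oIAlls f φ).Realize v ↔ ∀ (i : γ → M), φ.Realize (fun a => Sum.elim v i (f a)) := by
  unfold oIAlls
  rw [Formula.realize_iAlls]
  exact forall_congr' fun i => Formula.realize_relabel

lemma realize_oIExs {M : Type*} [L'.Structure M] {α β γ : Type} [Finite γ] {f : α → β ⊕ γ}
    {φ : L'.Formula α} {v : β → M} :
    (oIExs f φ).Realize v ↔ ∃ (i : γ → M), φ.Realize (fun a => Sum.elim v i (f a)) := by
  unfold oIExs
  rw [Formula.realize_iExs]
  exact exists_congr fun i => Formula.realize_relabel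

lemma realize_oIInf {M : Type*} [L'.Structure M] {α β : Type} {n : ℕ} (s : Finset β)
    (f : β → L'.BoundedFormula α n) (v : α → M) (v' : Fin n → M) :
    (oIInf s f).Realize v v' ↔ ∀ b ∈ s, (f b).Realize v v' := by
  unfold oIInf
  rw [BoundedFormula.realize_foldr_inf]
  simp

end OldAPI

section Dev
open Classical

variable {L : Lang} {ι : Type}

/-- `DLang` has no function symbols, so every term is a variable. -/
def dVarOf {β : Type} : (DLang L ι).Term β → β
  | Term.var x => x
  | Term.func f _ => Sum.elim Empty.elim (Sum.elim Empty.elim Empty.elim) f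

lemma dTerm_realize {β A : Type} [S : (DLang L ι).Structure A] (t : (DLang L ι).Term β)
    (v : β → A) : t.realize v = v (dVarOf t) := by
  cases t with
  | var x => rfl
  | func f ts => exact (Sum.elim Empty.elim (Sum.elim Empty.elim Empty.elim) f : False).elim

/-- The variable of a term over `Empty ⊕ Fin n`, as an element of `Fin n`. -/
def dVar {n : ℕ} (t : (DLang L ι).Term (Empty ⊕ Fin n)) : Fin n :=
  Sum.elim Empty.elim id (dVarOf t)

lemma dTerm_realize' {n : ℕ} {A : Type} [S : (DLang L ι).Structure A]
    (t : (DLang L ι).Term (Empty ⊕ Fin n)) (xs : Fin n → A) :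
    t.realize (Sum.elim (Empty.elim : Empty → A) xs) = xs (dVar t) := by
  rw [dTerm_realize]
  rcases h : dVarOf t with e | b
  · exact e.elim
  · simp [dVar, h]

/-- sort pattern of an assignment -/
def spat {P M : Type} {n : ℕ} (xs : Fin n → P ⊕ M) : Fin n → Bool := fun b => (xs b).isLeft

/-- equality pattern of an assignment -/
def epat {P M : Type} {n : ℕ} (xs : Fin n → P ⊕ M) : Fin n → Fin n → Prop :=
  fun b b' => (xs b).isLeft = true ∧ xs b = xs b'

abbrev Slot (k n : ℕ) : Type := (Fin k × Fin n) ⊕ Fin n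

/-- meaningful slots for a sort pattern -/
def Mng {k n : ℕ} (s : Fin n → Bool) : Slot k n → Prop :=
  Sum.elim (fun jb => s jb.2 = true) (fun b => s b = false)

noncomputable def dataOf {ι P M : Type} [Nonempty M] {k n : ℕ} (idx : Fin k → ι)
    (π : ι → P → M) (xs : Fin n → P ⊕ M) : Slot k n → M :=
  Sum.elim
    (fun jb => Sum.elim (fun p => π (idx jb.1) p) (fun _ => Classical.arbitrary M) (xs jb.2))
    (fun b => Sum.elim (fun _ => Classical.arbitrary M) id (xs b))

section dataLemmas

variable {P M : Type} [Nonempty M] {k n : ℕ} {idx : Fin k → ι} {π : ι → P → M}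
  {xs : Fin n → P ⊕ M}

lemma dataOf_inr {b : Fin n} {m : M} (h : xs b = Sum.inr m) :
    dataOf idx π xs (Sum.inr b) = m := by simp [dataOf, h]

lemma dataOf_inl {j : Fin k} {b : Fin n} {p : P} (h : xs b = Sum.inl p) :
    dataOf idx π xs (Sum.inl (j, b)) = π (idx j) p := by simp [dataOf, h]

lemma spat_false {b : Fin n} : spat xs b = false ↔ ∃ m, xs b = Sum.inr m := by
  cases h : xs b <;> simp [spat, h]

lemma spat_true {b : Fin n} : spat xs b = true ↔ ∃ p, xs b = Sum.inl p := by
  cases h : xs b <;> simp [spat, h]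

lemma spat_snoc_inr {m : M} :
    spat (Fin.snoc xs (Sum.inr m)) = Fin.snoc (spat xs) false := by
  funext x
  induction x using Fin.lastCases <;> simp [spat, Fin.snoc_castSucc, Fin.snoc_last]

lemma spat_snoc_inl {p : P} :
    spat (Fin.snoc xs (Sum.inl p)) = Fin.snoc (spat xs) true := by
  funext x
  induction x using Fin.lastCases <;> simp [spat, Fin.snoc_castSucc, Fin.snoc_last]

end dataLemmas

/-- retraction of `Fin (n+1)` onto `Fin n` sending `last` to `b` -/
def unext {n : ℕ} (b : Fin n) : Fin (n+1) → Fin n := Fin.lastCases b (fun i => i)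

@[simp] lemma unext_last {n : ℕ} (b : Fin n) : unext b (Fin.last n) = b := by
  simp [unext]

@[simp] lemma unext_castSucc {n : ℕ} (b : Fin n) (i : Fin n) : unext b i.castSucc = i := by
  simp [unext]

/-- extension of an equality pattern by a fresh second-sort element -/
def extM {n : ℕ} (E : Fin n → Fin n → Prop) : Fin (n+1) → Fin (n+1) → Prop :=
  fun x y =>
    Fin.lastCases False (fun x' => Fin.lastCases False (fun y' => E x' y') y) x

/-- extension of an equality pattern by a fresh first-sort element -/
def extNew {n : ℕ} (E : Fin n → Fin n → Prop) : Fin (n+1) → Fin (n+1) → Prop :=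
  fun x y =>
    Fin.lastCases (Fin.lastCases True (fun _ => False) y)
      (fun x' => Fin.lastCases False (fun y' => E x' y') y) x

/-- extension of an equality pattern by a duplicate of variable `b` -/
def extDup {n : ℕ} (E : Fin n → Fin n → Prop) (b : Fin n) :
    Fin (n+1) → Fin (n+1) → Prop :=
  fun x y => E (unext b x) (unext b y)

def extSlot {k n : ℕ} : Slot k (n+1) → Slot k n ⊕ (Fin k ⊕ Unit)
  | Sum.inl (j, x) =>
      Fin.lastCases (Sum.inr (Sum.inl j)) (fun x' => Sum.inl (Sum.inl (j, x'))) x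
  | Sum.inr x =>
      Fin.lastCases (Sum.inr (Sum.inr ())) (fun x' => Sum.inl (Sum.inr x')) x

def dupSlot {k n : ℕ} (b : Fin n) : Slot k (n+1) → Slot k n
  | Sum.inl (j, x) => Sum.inl (j, unext b x)
  | Sum.inr x => Sum.inr (unext b x)

section epatLemmas

variable {P M : Type} {n : ℕ} {xs : Fin n → P ⊕ M}

lemma epat_snoc_inr {m : M} : epat (Fin.snoc xs (Sum.inr m)) = extM (epat xs) := by
  funext x y
  apply propext
  induction x using Fin.lastCases with
  | last => simp [epat, extM, Fin.snoc_last]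
  | cast x' =>
    induction y using Fin.lastCases with
    | last =>
      simp only [epat, extM, Fin.snoc_last, Fin.snoc_castSucc, Fin.lastCases_castSucc,
        Fin.lastCases_last]
      cases h : xs x' <;> simp [h]
    | cast y' => simp [epat, extM, Fin.snoc_castSucc]

lemma epat_snoc_inl_new {p : P} (hp : ∀ b, xs b ≠ Sum.inl p) :
    epat (Fin.snoc xs (Sum.inl p)) = extNew (epat xs) := by
  funext x y
  apply propext
  induction x using Fin.lastCases with
  | last =>
    induction y using Fin.lastCases with
    | last => simp [epat, extNew, Fin.snoc_last]
    | cast y' =>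
      simp only [epat, extNew, Fin.snoc_last, Fin.snoc_castSucc, Fin.lastCases_castSucc,
        Fin.lastCases_last]
      simp only [Sum.isLeft_inl, true_and]
      exact iff_of_false (fun h => hp y' h.symm) (fun h => h)
  | cast x' =>
    induction y using Fin.lastCases with
    | last =>
      simp only [epat, extNew, Fin.snoc_last, Fin.snoc_castSucc, Fin.lastCases_castSucc,
        Fin.lastCases_last]
      exact iff_of_false (fun h => hp x' h.2) (fun h => h)
    | cast y' => simp [epat, extNew, Fin.snoc_castSucc]

lemma epat_snoc_inl_dup {p : P} {b : Fin n} (hb : xs b = Sum.inl p) :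
    epat (Fin.snoc xs (Sum.inl p)) = extDup (epat xs) b := by
  funext x y
  apply propext
  have hsnoc : ∀ z : Fin (n+1), (Fin.snoc xs (Sum.inl p) : Fin (n+1) → P ⊕ M) z = xs (unext b z) := by
    intro z
    induction z using Fin.lastCases with
    | last => simp [Fin.snoc_last, hb]
    | cast z' => simp [Fin.snoc_castSucc]
  simp [epat, extDup, hsnoc]

lemma dataOf_snoc_dup [Nonempty M] {k : ℕ} {idx : Fin k → ι} {π : ι → P → M}
    {p : P} {b : Fin n} (hb : xs b = Sum.inl p) :
    dataOf idx π (Fin.snoc xs (Sum.inl p)) = dataOf idx π xs ∘ dupSlot b := by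
  have hsnoc : ∀ z : Fin (n+1), (Fin.snoc xs (Sum.inl p) : Fin (n+1) → P ⊕ M) z = xs (unext b z) := by
    intro z
    induction z using Fin.lastCases with
    | last => simp [Fin.snoc_last, hb]
    | cast z' => simp [Fin.snoc_castSucc]
  funext x
  rcases x with ⟨j, x⟩ | x <;> simp [dataOf, dupSlot, hsnoc]

end epatLemmas

def projIdx : ∀ {ℓ : ℕ}, (DLang L ι).Relations ℓ → Option ι
  | 2, Sum.inr (Sum.inr i) => some i
  | _, _ => none

def suppList : ∀ {n : ℕ}, (DLang L ι).BoundedFormula Empty n → List ι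
  | _, BoundedFormula.falsum => []
  | _, BoundedFormula.equal _ _ => []
  | _, @BoundedFormula.rel _ _ _ _ R _ => (projIdx R).toList
  | _, BoundedFormula.imp φ ψ => suppList φ ++ suppList ψ
  | _, BoundedFormula.all φ => suppList φ

def SuppOK {k : ℕ} (idx : Fin k → ι) {n : ℕ} (φ : (DLang L ι).BoundedFormula Empty n) : Prop :=
  ∀ i ∈ suppList φ, ∃ j, idx j = i

lemma exists_supp {n : ℕ} (φ : (DLang L ι).BoundedFormula Empty n) :
    ∃ (k : ℕ) (idx : Fin k → ι), Function.Injective idx ∧ SuppOK idx φ := by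
  classical
  set s : Finset ι := (suppList φ).toFinset with hs
  refine ⟨s.card, fun j => (s.equivFin.symm j : ι), ?_, ?_⟩
  · intro a b h
    have := s.equivFin.symm.injective (Subtype.ext h)
    exact this
  · intro i hi
    have hmem : i ∈ s := by simpa [hs] using hi
    exact ⟨s.equivFin ⟨i, hmem⟩, by simp⟩

end Dev


section Key
open Classical

variable {L : Lang} {ι : Type}

lemma realize_iInf_formula {M : Type} [L.Structure M] {α β : Type} (s : Finset β)
    (f : β → L.Formula α) (v : α → M) :
    Formula.Realize (oIInf s f) v ↔ ∀ b ∈ s, (f b).Realize v := by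
  exact realize_oIInf s f _ _

section dataSnoc

variable {P M : Type} [Nonempty M] {k n : ℕ} {idx : Fin k → ι} {π : ι → P → M}
  {xs : Fin n → P ⊕ M}

lemma dataOf_snoc_castSucc_l (j : Fin k) (x' : Fin n) (a : P ⊕ M) :
    dataOf idx π (Fin.snoc xs a) (Sum.inl (j, Fin.castSucc x')) =
      dataOf idx π xs (Sum.inl (j, x')) := by
  simp [dataOf, Fin.snoc_castSucc]

lemma dataOf_snoc_castSucc_r (x' : Fin n) (a : P ⊕ M) :
    dataOf idx π (Fin.snoc xs a) (Sum.inr (Fin.castSucc x')) =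
      dataOf idx π xs (Sum.inr x') := by
  simp [dataOf, Fin.snoc_castSucc]

lemma dataOf_snoc_last_l (j : Fin k) (a : P ⊕ M) :
    dataOf idx π (Fin.snoc xs a) (Sum.inl (j, Fin.last n)) =
      Sum.elim (fun p => π (idx j) p) (fun _ => Classical.arbitrary M) a := by
  simp [dataOf, Fin.snoc_last]

lemma dataOf_snoc_last_r (a : P ⊕ M) :
    dataOf idx π (Fin.snoc xs a) (Sum.inr (Fin.last n)) =
      Sum.elim (fun _ => Classical.arbitrary M) id a := by
  simp [dataOf, Fin.snoc_last]

end dataSnoc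


section dHelpers

variable {P M : Type} [SM : L.Structure M] (π : ι → P → M) {nn : ℕ}

lemma dRealize_equal (t₁ t₂ : (DLang L ι).Term (Empty ⊕ Fin nn)) (xs : Fin nn → P ⊕ M) :
    (@BoundedFormula.Realize (DLang L ι) (P ⊕ M) (dStructure L ι P M π) Empty nn
      (BoundedFormula.equal t₁ t₂) Empty.elim xs) ↔ xs (dVar t₁) = xs (dVar t₂) := by
  letI : (DLang L ι).Structure (P ⊕ M) := dStructure L ι P M π
  show t₁.realize (Sum.elim Empty.elim xs) = t₂.realize (Sum.elim Empty.elim xs) ↔ _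
  rw [dTerm_realize', dTerm_realize']

lemma dRealize_rel {l : ℕ} (R : (DLang L ι).Relations l)
    (ts : Fin l → (DLang L ι).Term (Empty ⊕ Fin nn)) (xs : Fin nn → P ⊕ M) :
    (@BoundedFormula.Realize (DLang L ι) (P ⊕ M) (dStructure L ι P M π) Empty nn
      (BoundedFormula.rel R ts) Empty.elim xs) ↔
    (@Structure.RelMap (DLang L ι) (P ⊕ M) (dStructure L ι P M π) l R
      (fun i => xs (dVar (ts i)))) := by
  letI : (DLang L ι).Structure (P ⊕ M) := dStructure L ι P M π
  show Structure.RelMap R (fun i => (ts i).realize (Sum.elim Empty.elim xs)) ↔ _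
  rw [show (fun i => (ts i).realize (Sum.elim Empty.elim xs)) =
    fun i => xs (dVar (ts i)) from funext fun i => dTerm_realize' _ _]

lemma dRelMap_fun {m : ℕ} (g : L.Functions m) (y : Fin (m+1) → P ⊕ M) :
    (@Structure.RelMap (DLang L ι) (P ⊕ M) (dStructure L ι P M π) (m+1) (Sum.inl g) y) ↔
      ∃ a : Fin m → M, (∀ i : Fin m, y i.castSucc = Sum.inr (a i)) ∧
        y (Fin.last m) = Sum.inr (Structure.funMap g a) := Iff.rfl

lemma dRelMap_rel {l : ℕ} (r : L.Relations l) (y : Fin l → P ⊕ M) :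
    (@Structure.RelMap (DLang L ι) (P ⊕ M) (dStructure L ι P M π) l
      (Sum.inr (Sum.inl r)) y) ↔
      ∃ a : Fin l → M, (∀ i, y i = Sum.inr (a i)) ∧
        Structure.RelMap (L := L) (M := M) (show L.Relations l from r) a := Iff.rfl

lemma dRelMap_sort (t : Unit) (y : Fin 1 → P ⊕ M) :
    (@Structure.RelMap (DLang L ι) (P ⊕ M) (dStructure L ι P M π) 1
      (Sum.inr (Sum.inr t)) y) ↔ ∃ p : P, y 0 = Sum.inl p := Iff.rfl

lemma dRelMap_proj (i : ι) (y : Fin 2 → P ⊕ M) :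
    (@Structure.RelMap (DLang L ι) (P ⊕ M) (dStructure L ι P M π) 2
      (Sum.inr (Sum.inr i)) y) ↔
      ∃ p : P, y 0 = Sum.inl p ∧ y 1 = Sum.inr (π i p) := Iff.rfl

end dHelpers

theorem key (L : Lang) (ι : Type) {k : ℕ} (idx : Fin k → ι) (hinj : Function.Injective idx)
    {n : ℕ} (φ : (DLang L ι).BoundedFormula Empty n) (hsupp : SuppOK idx φ) :
    ∃ Ψ : (Fin n → Bool) → (Fin n → Fin n → Prop) → L.Formula (Slot k n),
      (∀ (M : Type) [L.Structure M] (s : Fin n → Bool) (E : Fin n → Fin n → Prop)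
        (d d' : Slot k n → M), (∀ x, Mng s x → d x = d' x) →
          ((Ψ s E).Realize d ↔ (Ψ s E).Realize d')) ∧
      (∀ (P M : Type) [L.Structure M] [Nonempty M] (π : ι → P → M), Generic π →
        ∀ (xs : Fin n → P ⊕ M),
          (@BoundedFormula.Realize (DLang L ι) (P ⊕ M) (dStructure L ι P M π) Empty n φ
              Empty.elim xs ↔ (Ψ (spat xs) (epat xs)).Realize (dataOf idx π xs))) := by
  revert hsupp
  induction φ with
  | falsum =>
    intro _hsupp
    refine ⟨fun _ _ => ⊥, fun M _ s E d d' _ => Iff.rfl, fun P M _ _ π hgen xs => ?_⟩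
    exact iff_of_false (fun h => h) (by simp)
  | equal t₁ t₂ =>
    intro _hsupp
    refine ⟨fun s E =>
      if s (dVar t₁) = true then
        (if s (dVar t₂) = true then (if E (dVar t₁) (dVar t₂) then ⊤ else ⊥) else ⊥)
      else (if s (dVar t₂) = true then ⊥
            else Term.equal (Term.var (Sum.inr (dVar t₁))) (Term.var (Sum.inr (dVar t₂)))),
      ?_, ?_⟩
    · intro M _ s E d d' h
      beta_reduce
      split_ifs with h1 h2 h3 h2
      · rfl
      · rfl
      · rfl
      · rfl
      · simp only [Formula.realize_equal, Term.realize_var]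
        rw [h _ (by simpa [Mng] using h1), h _ (by simpa [Mng] using h2)]
    · intro P M _ _ π hgen xs
      have hL := dRealize_equal π t₁ t₂ xs
      rw [hL]
      beta_reduce
      rcases hx1 : xs (dVar t₁) with p₁ | m₁ <;> rcases hx2 : xs (dVar t₂) with p₂ | m₂
      · rw [if_pos (by simp [spat, hx1]), if_pos (by simp [spat, hx2])]
        by_cases hE : epat xs (dVar t₁) (dVar t₂)
        · rw [if_pos hE]
          exact iff_of_true (by rw [← hx1, ← hx2, hE.2]) (by simp)
        · rw [if_neg hE]
          refine iff_of_false (fun hcon => hE ⟨by simp [hx1], by rw [hx1, hx2]; exact hcon⟩)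
            (by simp)
      · rw [if_pos (by simp [spat, hx1]), if_neg (by simp [spat, hx2])]
        exact iff_of_false (by simp) (by simp)
      · rw [if_neg (by simp [spat, hx1]), if_pos (by simp [spat, hx2])]
        exact iff_of_false (by simp) (by simp)
      · rw [if_neg (by simp [spat, hx1]), if_neg (by simp [spat, hx2])]
        simp only [Formula.realize_equal, Term.realize_var, dataOf_inr hx1, dataOf_inr hx2,
          Sum.inr.injEq]
  | rel R ts =>
    rename_i nn l
    intro hsupp
    rcases R with g | R'
    · -- graph of a function symbol
      clear hsupp
      revert ts
      revert g
      cases l with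
      | zero => intro g _; cases g
      | succ m =>
        intro g ts
        refine ⟨fun s E =>
          if ∀ i, s (dVar (ts i)) = false then
            Term.equal (Term.func g (fun i => Term.var (Sum.inr (dVar (ts (Fin.castSucc i))))))
              (Term.var (Sum.inr (dVar (ts (Fin.last m)))))
          else ⊥, ?_, ?_⟩
        · intro M _ s E d d' h
          beta_reduce
          split_ifs with hall
          · simp only [Formula.realize_equal, Term.realize_var, Term.realize_func]
            have hc : ∀ i, d (Sum.inr (dVar (ts i))) = d' (Sum.inr (dVar (ts i))) :=
              fun i => h _ (by simpa [Mng] using hall i)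
            rw [hc (Fin.last m)]
            have : (fun i => d (Sum.inr (dVar (ts (Fin.castSucc i))))) =
                (fun i => d' (Sum.inr (dVar (ts (Fin.castSucc i))))) :=
              funext fun i => hc (Fin.castSucc i)
            exact Iff.of_eq (congrArg (fun f => (Structure.funMap (L := L) g f : M) =
              d' (Sum.inr (dVar (ts (Fin.last m))))) this)
          · rfl
        · intro P M _ _ π hgen xs
          have hL : (@BoundedFormula.Realize (DLang L ι) (P ⊕ M) (dStructure L ι P M π) Empty nn
              (BoundedFormula.rel (Sum.inl g) ts) Empty.elim xs) ↔
              ∃ a : Fin m → M, (∀ i : Fin m, xs (dVar (ts (Fin.castSucc i))) = Sum.inr (a i)) ∧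
                xs (dVar (ts (Fin.last m))) = Sum.inr (Structure.funMap g a) :=
            (dRealize_rel π (Sum.inl g) ts xs).trans (dRelMap_fun π g _)
          rw [hL]
          beta_reduce
          by_cases hall : ∀ i, spat xs (dVar (ts i)) = false
          · rw [if_pos hall]
            have hrep : ∀ i, xs (dVar (ts i)) =
                Sum.inr (dataOf idx π xs (Sum.inr (dVar (ts i)))) := by
              intro i
              obtain ⟨mm, hmm⟩ := spat_false.mp (hall i)
              rw [hmm, dataOf_inr hmm]
            simp only [Formula.realize_equal, Term.realize_var, Term.realize_func]
            constructor
            · rintro ⟨a, ha, hlast⟩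
              have ha' : ∀ i, a i = dataOf idx π xs (Sum.inr (dVar (ts (Fin.castSucc i)))) := by
                intro i
                have := (ha i).symm.trans (hrep (Fin.castSucc i))
                exact Sum.inr.inj this
              have h2 := (hlast.symm.trans (hrep (Fin.last m)))
              rw [show a = fun i => dataOf idx π xs (Sum.inr (dVar (ts (Fin.castSucc i)))) from
                funext ha'] at h2
              exact Sum.inr.inj h2
            · intro h
              refine ⟨fun i => dataOf idx π xs (Sum.inr (dVar (ts (Fin.castSucc i)))),
                fun i => hrep _, ?_⟩
              rw [hrep (Fin.last m), ← h]
              rfl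
          · rw [if_neg hall]
            refine iff_of_false ?_ (by simp)
            rintro ⟨a, ha, hlast⟩
            push_neg at hall
            obtain ⟨i, hi⟩ := hall
            have hi' : spat xs (dVar (ts i)) = true := by
              cases hh : spat xs (dVar (ts i))
              · exact absurd hh hi
              · rfl
            obtain ⟨p, hp⟩ := spat_true.mp hi'
            induction i using Fin.lastCases with
            | last => exact absurd (hlast.symm.trans hp) (by simp)
            | cast i' => exact absurd ((ha i').symm.trans hp) (by simp)
    rcases R' with r | t
    · -- an L-relation symbol
      refine ⟨fun s E =>
        if ∀ i, s (dVar (ts i)) = false then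
          Relations.formula (show L.Relations l from r) (fun i => Term.var (Sum.inr (dVar (ts i))))
        else ⊥, ?_, ?_⟩
      · intro M _ s E d d' h
        beta_reduce
        split_ifs with hall
        · simp only [Formula.realize_rel, Term.realize_var]
          have : (fun i => d (Sum.inr (dVar (ts i)))) = (fun i => d' (Sum.inr (dVar (ts i)))) :=
            funext fun i => h _ (by simpa [Mng] using hall i)
          exact Iff.of_eq (congrArg (fun f =>
            Structure.RelMap (L := L) (show L.Relations l from r) f) this)
        · rfl
      · intro P M _ _ π hgen xs
        have hL : (@BoundedFormula.Realize (DLang L ι) (P ⊕ M) (dStructure L ι P M π) Empty nn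
            (BoundedFormula.rel (Sum.inr (Sum.inl r)) ts) Empty.elim xs) ↔
            ∃ a : Fin l → M, (∀ i, xs (dVar (ts i)) = Sum.inr (a i)) ∧
              Structure.RelMap (L := L) (M := M) (show L.Relations l from r) a :=
          (dRealize_rel π (Sum.inr (Sum.inl r)) ts xs).trans
            (dRelMap_rel (L := L) π (show L.Relations l from r) _)
        rw [hL]
        beta_reduce
        by_cases hall : ∀ i, spat xs (dVar (ts i)) = false
        · rw [if_pos hall]
          have hrep : ∀ i, xs (dVar (ts i)) =
              Sum.inr (dataOf idx π xs (Sum.inr (dVar (ts i)))) := by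
            intro i
            obtain ⟨mm, hmm⟩ := spat_false.mp (hall i)
            rw [hmm, dataOf_inr hmm]
          simp only [Formula.realize_rel, Term.realize_var]
          constructor
          · rintro ⟨a, ha, hr⟩
            have ha' : a = fun i => dataOf idx π xs (Sum.inr (dVar (ts i))) :=
              funext fun i => Sum.inr.inj ((ha i).symm.trans (hrep i))
            rwa [ha'] at hr
          · intro hr
            exact ⟨fun i => dataOf idx π xs (Sum.inr (dVar (ts i))), fun i => hrep i, hr⟩
        · rw [if_neg hall]
          refine iff_of_false ?_ (by simp)
          rintro ⟨a, ha, _⟩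
          push_neg at hall
          obtain ⟨i, hi⟩ := hall
          have hi' : spat xs (dVar (ts i)) = true := by
            cases hh : spat xs (dVar (ts i))
            · exact absurd hh hi
            · rfl
          obtain ⟨p, hp⟩ := spat_true.mp hi'
          exact absurd ((ha i).symm.trans hp) (by simp)
    · -- projection-language symbols
      revert hsupp
      revert ts
      revert t
      cases l with
      | zero => intro t _ _; cases t
      | succ l1 =>
      cases l1 with
      | succ l2 =>
        cases l2 with
        | zero =>
        intro t ts hsupp
        obtain ⟨j₀, hj₀⟩ : ∃ j, idx j = t := hsupp t (by simp [suppList, projIdx]; exact List.mem_singleton_self _)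
        refine ⟨fun s E =>
          if s (dVar (ts 0)) = true ∧ s (dVar (ts 1)) = false then
            Term.equal (Term.var (Sum.inl (j₀, dVar (ts 0)))) (Term.var (Sum.inr (dVar (ts 1))))
          else ⊥, ?_, ?_⟩
        · intro M _ s E d d' h
          beta_reduce
          split_ifs with hc
          · simp only [Formula.realize_equal, Term.realize_var]
            rw [h _ (by simpa [Mng] using hc.1), h _ (by simpa [Mng] using hc.2)]
          · rfl
        · intro P M _ _ π hgen xs
          have hL : (@BoundedFormula.Realize (DLang L ι) (P ⊕ M) (dStructure L ι P M π) Empty nn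
              (BoundedFormula.rel (Sum.inr (Sum.inr t)) ts) Empty.elim xs) ↔
              ∃ p : P, xs (dVar (ts 0)) = Sum.inl p ∧ xs (dVar (ts 1)) = Sum.inr (π t p) :=
            (dRealize_rel π (Sum.inr (Sum.inr t)) ts xs).trans (dRelMap_proj π t _)
          rw [hL]
          beta_reduce
          rcases hx0 : xs (dVar (ts 0)) with p | m <;> rcases hx1 : xs (dVar (ts 1)) with p' | m'
          · rw [if_neg (by simp [spat, hx0, hx1])]
            refine iff_of_false ?_ (by simp)
            rintro ⟨q, _, hq2⟩
            exact absurd hq2 (by simp)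
          · rw [if_pos ⟨by simp [spat, hx0], by simp [spat, hx1]⟩]
            simp only [Formula.realize_equal, Term.realize_var, dataOf_inl hx0, dataOf_inr hx1,
              hj₀]
            constructor
            · rintro ⟨q, hq1, hq2⟩
              obtain rfl : p = q := Sum.inl.inj hq1
              exact (Sum.inr.inj hq2).symm
            · intro h
              exact ⟨p, rfl, congrArg Sum.inr h.symm⟩
          · rw [if_neg (by simp [spat, hx0])]
            refine iff_of_false ?_ (by simp)
            rintro ⟨q, hq1, _⟩
            exact absurd hq1 (by simp)
          · rw [if_neg (by simp [spat, hx0])]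
            refine iff_of_false ?_ (by simp)
            rintro ⟨q, hq1, _⟩
            exact absurd hq1 (by simp)
        | succ l3 => intro t _ _; cases t
      | zero =>
        intro t ts _
        refine ⟨fun s E => if s (dVar (ts 0)) = true then ⊤ else ⊥, ?_, ?_⟩
        · intro M _ s E d d' h
          beta_reduce
          split_ifs <;> rfl
        · intro P M _ _ π hgen xs
          have hL : (@BoundedFormula.Realize (DLang L ι) (P ⊕ M) (dStructure L ι P M π) Empty nn
              (BoundedFormula.rel (Sum.inr (Sum.inr t)) ts) Empty.elim xs) ↔
              ∃ p : P, xs (dVar (ts 0)) = Sum.inl p :=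
            (dRealize_rel π (Sum.inr (Sum.inr t)) ts xs).trans (dRelMap_sort π t _)
          rw [hL]
          beta_reduce
          by_cases hs : spat xs (dVar (ts 0)) = true
          · rw [if_pos hs]
            exact iff_of_true (spat_true.mp hs) (by simp)
          · rw [if_neg hs]
            refine iff_of_false ?_ (by simp)
            rintro ⟨p, hp⟩
            exact hs (by simp [spat, hp])
  | imp φ₁ φ₂ ih₁ ih₂ =>
    intro hsupp
    obtain ⟨Ψ₁, hi₁, hm₁⟩ := ih₁ (fun i hi => hsupp i (by simp [suppList]; exact Or.inl hi))
    obtain ⟨Ψ₂, hi₂, hm₂⟩ := ih₂ (fun i hi => hsupp i (by simp [suppList]; exact Or.inr hi))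
    refine ⟨fun s E => (Ψ₁ s E).imp (Ψ₂ s E), ?_, ?_⟩
    · intro M _ s E d d' h
      simp only [Formula.realize_imp]
      rw [hi₁ M s E d d' h, hi₂ M s E d d' h]
    · intro P M _ _ π hgen xs
      have hL : (@BoundedFormula.Realize (DLang L ι) (P ⊕ M) (dStructure L ι P M π) Empty _
          (φ₁.imp φ₂) Empty.elim xs) ↔
          ((@BoundedFormula.Realize (DLang L ι) (P ⊕ M) (dStructure L ι P M π) Empty _
            φ₁ Empty.elim xs) →
          (@BoundedFormula.Realize (DLang L ι) (P ⊕ M) (dStructure L ι P M π) Empty _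
            φ₂ Empty.elim xs)) := Iff.rfl
      rw [hL, hm₁ P M π hgen xs, hm₂ P M π hgen xs]
      simp only [Formula.realize_imp]
  | all φ ih =>
    rename_i nn
    intro hsupp
    obtain ⟨Ψ, hinv, hmain⟩ := ih hsupp
    refine ⟨fun s E =>
      (oIAlls extSlot (Ψ (Fin.snoc s false) (extM E))) ⊓
      ((oIAlls extSlot (Ψ (Fin.snoc s true) (extNew E))) ⊓
        (oIInf (Finset.univ.filter (fun b => s b = true))
          (fun b => (Ψ (Fin.snoc s true) (extDup E b)).relabel (dupSlot b)))), ?_, ?_⟩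
    · -- invariance
      intro M _ s E d d' h
      simp only [Formula.realize_inf]
      refine and_congr ?_ (and_congr ?_ ?_)
      · rw [realize_oIAlls, realize_oIAlls]
        refine forall_congr' fun g => hinv M _ _ _ _ ?_
        intro x hx
        rcases x with ⟨j, x⟩ | x
        · induction x using Fin.lastCases with
          | last => simp [Mng, Fin.snoc_last] at hx
          | cast x' =>
            simp only [extSlot, Fin.lastCases_castSucc, Sum.elim_inl]
            exact h _ (by simpa [Mng, Fin.snoc_castSucc] using hx)
        · induction x using Fin.lastCases with
          | last => simp [extSlot, Fin.lastCases_last]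
          | cast x' =>
            simp only [extSlot, Fin.lastCases_castSucc, Sum.elim_inl]
            exact h _ (by simpa [Mng, Fin.snoc_castSucc] using hx)
      · rw [realize_oIAlls, realize_oIAlls]
        refine forall_congr' fun g => hinv M _ _ _ _ ?_
        intro x hx
        rcases x with ⟨j, x⟩ | x
        · induction x using Fin.lastCases with
          | last => simp [extSlot, Fin.lastCases_last]
          | cast x' =>
            simp only [extSlot, Fin.lastCases_castSucc, Sum.elim_inl]
            exact h _ (by simpa [Mng, Fin.snoc_castSucc] using hx)
        · induction x using Fin.lastCases with
          | last => simp [Mng, Fin.snoc_last] at hx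
          | cast x' =>
            simp only [extSlot, Fin.lastCases_castSucc, Sum.elim_inl]
            exact h _ (by simpa [Mng, Fin.snoc_castSucc] using hx)
      · rw [Formula.Realize, Formula.Realize, realize_oIInf,
          realize_oIInf]
        refine forall₂_congr fun b hb => ?_
        have hsb : s b = true := (Finset.mem_filter.mp hb).2
        show Formula.Realize _ d ↔ Formula.Realize _ d'
        rw [Formula.realize_relabel, Formula.realize_relabel]
        refine hinv M _ _ _ _ ?_
        intro x hx
        rcases x with ⟨j, x⟩ | x
        · simp only [Function.comp_apply, dupSlot]
          induction x using Fin.lastCases with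
          | last => rw [unext_last]; exact h _ (by simp [Mng, hsb])
          | cast x' =>
            rw [unext_castSucc]
            exact h _ (by simpa [Mng, Fin.snoc_castSucc] using hx)
        · simp only [Function.comp_apply, dupSlot]
          induction x using Fin.lastCases with
          | last => simp [Mng, Fin.snoc_last] at hx
          | cast x' =>
            rw [unext_castSucc]
            exact h _ (by simpa [Mng, Fin.snoc_castSucc] using hx)
    · -- realization
      intro P M _ _ π hgen xs
      have hL : (@BoundedFormula.Realize (DLang L ι) (P ⊕ M) (dStructure L ι P M π) Empty nn
          φ.all Empty.elim xs) ↔ ∀ a : P ⊕ M,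
            @BoundedFormula.Realize (DLang L ι) (P ⊕ M) (dStructure L ι P M π) Empty (nn+1)
              φ Empty.elim (Fin.snoc xs a) := Iff.rfl
      rw [hL]
      beta_reduce
      simp only [Formula.realize_inf]
      constructor
      · intro hall
        refine ⟨?_, ?_, ?_⟩
        · -- second-sort piece
          rw [realize_oIAlls]
          intro g
          have h1 := (hmain P M π hgen (Fin.snoc xs (Sum.inr (g (Sum.inr ()))))).mp (hall _)
          rw [spat_snoc_inr, epat_snoc_inr] at h1
          refine (hinv M _ _ _ _ ?_).mp h1
          intro x hx
          rcases x with ⟨j, x⟩ | x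
          · induction x using Fin.lastCases with
            | last => simp [Mng, Fin.snoc_last] at hx
            | cast x' =>
              simp only [extSlot, Fin.lastCases_castSucc, Sum.elim_inl]
              exact dataOf_snoc_castSucc_l j x' _
          · induction x using Fin.lastCases with
            | last =>
              simp only [extSlot, Fin.lastCases_last, Sum.elim_inr]
              rw [dataOf_snoc_last_r]
              rfl
            | cast x' =>
              simp only [extSlot, Fin.lastCases_castSucc, Sum.elim_inl]
              exact dataOf_snoc_castSucc_r x' _
        · -- fresh first-sort piece
          rw [realize_oIAlls]
          intro g
          obtain ⟨S, hcard, hS⟩ := hgen k idx hinj (fun j => g (Sum.inl j)) (nn+1)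
          obtain ⟨p, hpS, hpnew⟩ : ∃ p ∈ S, ∀ b, xs b ≠ Sum.inl p := by
            by_contra hcon
            push_neg at hcon
            have hsub : S ⊆ Finset.univ.biUnion
                (fun b : Fin nn => Sum.elim (fun p => {p}) (fun _ => (∅ : Finset P)) (xs b)) := by
              intro p hp
              obtain ⟨b, hb⟩ := hcon p hp
              refine Finset.mem_biUnion.2 ⟨b, Finset.mem_univ _, ?_⟩
              rw [hb]
              simp
            have hle : S.card ≤ nn := by
              calc S.card ≤ _ := Finset.card_le_card hsub
                _ ≤ ∑ b : Fin nn,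
                    (Sum.elim (fun p => ({p} : Finset P)) (fun _ => ∅) (xs b)).card :=
                  Finset.card_biUnion_le
                _ ≤ ∑ _b : Fin nn, 1 :=
                  Finset.sum_le_sum (fun b _ => by rcases xs b with p | m <;> simp)
                _ = nn := by simp
            omega
          have h1 := (hmain P M π hgen (Fin.snoc xs (Sum.inl p))).mp (hall _)
          rw [spat_snoc_inl, epat_snoc_inl_new hpnew] at h1
          refine (hinv M _ _ _ _ ?_).mp h1
          intro x hx
          rcases x with ⟨j, x⟩ | x
          · induction x using Fin.lastCases with
            | last =>
              simp only [extSlot, Fin.lastCases_last, Sum.elim_inr]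
              rw [dataOf_snoc_last_l]
              simp [hS p hpS j]
            | cast x' =>
              simp only [extSlot, Fin.lastCases_castSucc, Sum.elim_inl]
              exact dataOf_snoc_castSucc_l j x' _
          · induction x using Fin.lastCases with
            | last => simp [Mng, Fin.snoc_last] at hx
            | cast x' =>
              simp only [extSlot, Fin.lastCases_castSucc, Sum.elim_inl]
              exact dataOf_snoc_castSucc_r x' _
        · -- duplicate piece
          rw [Formula.Realize, realize_oIInf]
          intro b hb
          have hsb : spat xs b = true := (Finset.mem_filter.mp hb).2
          obtain ⟨p, hp⟩ := spat_true.mp hsb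
          have h1 := (hmain P M π hgen (Fin.snoc xs (Sum.inl p))).mp (hall _)
          rw [spat_snoc_inl, epat_snoc_inl_dup hp, dataOf_snoc_dup hp] at h1
          show Formula.Realize _ (dataOf idx π xs)
          rw [Formula.realize_relabel]
          exact h1
      · rintro ⟨h1, h2, h3⟩ a
        rcases ha : a with p | m
        · by_cases hdup : ∃ b, xs b = Sum.inl p
          · obtain ⟨b, hb⟩ := hdup
            have hsb : spat xs b = true := by simp [spat, hb]
            rw [Formula.Realize, realize_oIInf] at h3
            have h4 := h3 b (Finset.mem_filter.2 ⟨Finset.mem_univ _, hsb⟩)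
            have h4' : (Ψ (Fin.snoc (spat xs) true) (extDup (epat xs) b)).Realize
                (dataOf idx π xs ∘ dupSlot b) := by
              rw [← Formula.realize_relabel]
              exact h4
            refine (hmain P M π hgen _).mpr ?_
            rw [spat_snoc_inl, epat_snoc_inl_dup hb, dataOf_snoc_dup hb]
            exact h4'
          · push_neg at hdup
            rw [realize_oIAlls] at h2
            have hg := h2 (Sum.elim (fun j => π (idx j) p) (fun _ => Classical.arbitrary M))
            refine (hmain P M π hgen _).mpr ?_
            rw [spat_snoc_inl, epat_snoc_inl_new hdup]
            refine (hinv M _ _ _ _ ?_).mpr hg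
            intro x hx
            rcases x with ⟨j, x⟩ | x
            · induction x using Fin.lastCases with
              | last =>
                simp only [extSlot, Fin.lastCases_last, Sum.elim_inr]
                rw [dataOf_snoc_last_l]
                simp
              | cast x' =>
                simp only [extSlot, Fin.lastCases_castSucc, Sum.elim_inl]
                exact dataOf_snoc_castSucc_l j x' _
            · induction x using Fin.lastCases with
              | last => simp [Mng, Fin.snoc_last] at hx
              | cast x' =>
                simp only [extSlot, Fin.lastCases_castSucc, Sum.elim_inl]
                exact dataOf_snoc_castSucc_r x' _
        · rw [realize_oIAlls] at h1
          have hg := h1 (fun _ => m)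
          refine (hmain P M π hgen _).mpr ?_
          rw [spat_snoc_inr, epat_snoc_inr]
          refine (hinv M _ _ _ _ ?_).mpr hg
          intro x hx
          rcases x with ⟨j, x⟩ | x
          · induction x using Fin.lastCases with
            | last => simp [Mng, Fin.snoc_last] at hx
            | cast x' =>
              simp only [extSlot, Fin.lastCases_castSucc, Sum.elim_inl]
              exact dataOf_snoc_castSucc_l j x' _
          · induction x using Fin.lastCases with
            | last =>
              simp only [extSlot, Fin.lastCases_last, Sum.elim_inr]
              rw [dataOf_snoc_last_r]
              rfl
            | cast x' =>
              simp only [extSlot, Fin.lastCases_castSucc, Sum.elim_inl]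
              exact dataOf_snoc_castSucc_r x' _

end Key


section Transfer
open Classical

variable {L : Lang} {ι : Type}

/-- The sort relation symbol. -/
def sortRel (L : Lang) (ι : Type) : (DLang L ι).Relations 1 := Sum.inr (Sum.inr ())
/-- The projection relation symbols. -/
def projRel (L : Lang) {ι : Type} (i : ι) : (DLang L ι).Relations 2 := Sum.inr (Sum.inr i)
/-- The relation symbols of `L` inside `DLang`. -/
def relRel (ι : Type) {L : Lang} {m : ℕ} (r : L.Relations m) : (DLang L ι).Relations m :=
  Sum.inr (Sum.inl r)

/-- Tuple-style reformulation of genericity. -/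
lemma generic_iff_tuple {P M : Type} (π : ι → P → M) :
    Generic π ↔ ∀ (k m : ℕ) (idx : Fin k → ι), Function.Injective idx → ∀ a : Fin k → M,
      ∃ p : Fin m → P, Function.Injective p ∧
        ∀ (j : Fin m) (k' : Fin k), π (idx k') (p j) = a k' := by
  constructor
  · intro hgen k m idx hinj a
    obtain ⟨S, hcard, hS⟩ := hgen k idx hinj a m
    obtain ⟨T, hTS, hT⟩ := Finset.exists_subset_card_eq hcard
    refine ⟨fun j => (T.equivFin.symm (Fin.cast hT.symm j) : T), ?_, ?_⟩
    · intro a₁ a₂ h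
      have := T.equivFin.symm.injective (Subtype.ext h)
      simpa [Fin.ext_iff] using congrArg Fin.val this
    · intro j k'
      exact hS _ (hTS (T.equivFin.symm (Fin.cast hT.symm j)).2) k'
  · intro h k idx hinj a m
    obtain ⟨p, hpinj, hp⟩ := h k m idx hinj a
    refine ⟨Finset.image p Finset.univ, ?_, ?_⟩
    · rw [Finset.card_image_of_injective _ hpinj]
      simp
    · intro q hq k'
      obtain ⟨j, _, rfl⟩ := Finset.mem_image.mp hq
      exact hp j k'

/-- The canonical family of projections is generic. -/
lemma canonGeneric (ι M₀ : Type) [Infinite ι] [Infinite M₀] :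
    Generic (fun (i : ι) (x : ι → M₀) => x i) := by
  classical
  intro n idx hinj a m
  obtain ⟨i0, hi0⟩ : ∃ i : ι, ∀ k, idx k ≠ i := by
    obtain ⟨i, hi⟩ := Infinite.exists_notMem_finset ((Finset.univ : Finset (Fin n)).image idx)
    exact ⟨i, fun k hk => hi (Finset.mem_image.2 ⟨k, Finset.mem_univ _, hk⟩)⟩
  obtain ⟨C, hC⟩ := Infinite.exists_subset_card_eq M₀ m
  haveI : Nonempty M₀ := inferInstance
  set base : ι → M₀ := fun i =>
    if h : ∃ k, idx k = i then a h.choose else Classical.arbitrary M₀ with hbase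
  refine ⟨C.image (fun c => Function.update base i0 c), ?_, ?_⟩
  · rw [Finset.card_image_of_injective]
    · omega
    · intro c₁ c₂ h
      have := congrFun h i0
      simpa using this
  · intro x hx q
    obtain ⟨c, _, rfl⟩ := Finset.mem_image.mp hx
    show Function.update base i0 c (idx q) = a q
    have h1 : Function.update base i0 c (idx q) = base (idx q) :=
      Function.update_of_ne (hi0 q) _ _
    rw [h1, hbase]
    have hex : ∃ k, idx k = idx q := ⟨q, rfl⟩
    simp only []
    rw [dif_pos hex]
    have heq : hex.choose = q := hinj hex.choose_spec
    rw [heq]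

/-- The sentence expressing an instance of genericity. -/
noncomputable def genSent (L : Lang) {ι : Type} (k m : ℕ) (idx : Fin k → ι) :
    (DLang L ι).Sentence :=
  oIAlls (Sum.inr : Fin k → Empty ⊕ Fin k)
    ((oIInf (Finset.univ : Finset (Fin k))
        (fun k' => ((sortRel L ι).formula₁ (Term.var k')).not)).imp
      (oIExs (id : Fin k ⊕ Fin m → Fin k ⊕ Fin m)
        ((oIInf (Finset.univ : Finset (Fin m))
            (fun j => (sortRel L ι).formula₁ (Term.var (Sum.inr j)))) ⊓
         ((oIInf (Finset.univ : Finset (Fin m × Fin k))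
            (fun q => (projRel L (idx q.2)).formula₂
              (Term.var (Sum.inr q.1)) (Term.var (Sum.inl q.2)))) ⊓
          (oIInf
            ((Finset.univ : Finset (Fin m × Fin m)).filter (fun q => q.1 ≠ q.2))
            (fun q => (Term.equal (Term.var (Sum.inr q.1)) (Term.var (Sum.inr q.2))).not))))))

lemma realize_genSent {P M : Type} [SM : L.Structure M] (π : ι → P → M)
    (k m : ℕ) (idx : Fin k → ι) :
    (@Sentence.Realize (DLang L ι) (P ⊕ M) (dStructure L ι P M π) (genSent L k m idx)) ↔
    ∀ a : Fin k → M, ∃ p : Fin m → P, Function.Injective p ∧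
      ∀ (j : Fin m) (k' : Fin k), π (idx k') (p j) = a k' := by
  letI : (DLang L ι).Structure (P ⊕ M) := dStructure L ι P M π
  have hsort : ∀ (y : Fin 1 → P ⊕ M),
      Structure.RelMap (M := P ⊕ M) (sortRel L ι) y ↔ ∃ p : P, y 0 = Sum.inl p :=
    fun y => dRelMap_sort π () y
  have hproj : ∀ (i : ι) (y : Fin 2 → P ⊕ M),
      Structure.RelMap (M := P ⊕ M) (projRel L i) y ↔
        ∃ p : P, y 0 = Sum.inl p ∧ y 1 = Sum.inr (π i p) :=
    fun i y => dRelMap_proj π i y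
  rw [Sentence.Realize, genSent, realize_oIAlls]
  constructor
  · intro h a
    have h1 := h (fun k' => Sum.inr (a k'))
    rw [Formula.realize_imp] at h1
    have h2 := h1 (by
      rw [realize_iInf_formula]
      intro k' _
      rw [Formula.realize_not, Formula.realize_rel₁, hsort]
      rintro ⟨p, hp⟩
      simp at hp)
    rw [realize_oIExs] at h2
    obtain ⟨w, hw⟩ := h2
    rw [Formula.realize_inf, Formula.realize_inf, realize_iInf_formula,
      realize_iInf_formula, realize_iInf_formula] at hw
    obtain ⟨hwS, hwP, hwD⟩ := hw
    have hrep : ∀ j : Fin m, ∃ p : P, w j = Sum.inl p := by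
      intro j
      have := hwS j (Finset.mem_univ _)
      rw [Formula.realize_rel₁, hsort] at this
      obtain ⟨p, hp⟩ := this
      simp only [Matrix.cons_val_zero, Term.realize_var] at hp
      simp only [Sum.elim_inr, id_eq] at hp
      exact ⟨p, hp⟩
    choose p hp using hrep
    refine ⟨p, ?_, ?_⟩
    · intro j₁ j₂ hj
      by_contra hne
      have := hwD (j₁, j₂) (Finset.mem_filter.2 ⟨Finset.mem_univ _, hne⟩)
      rw [Formula.realize_not, Formula.realize_equal] at this
      apply this
      simp only [Term.realize_var, Sum.elim_inr, id_eq]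
      rw [hp j₁, hp j₂, hj]
    · intro j k'
      have := hwP (j, k') (Finset.mem_univ _)
      rw [Formula.realize_rel₂, hproj] at this
      obtain ⟨q, hq1, hq2⟩ := this
      simp only [Matrix.cons_val_zero, Matrix.cons_val_one, Matrix.head_cons,
        Term.realize_var, Sum.elim_inr, Sum.elim_inl, id_eq] at hq1 hq2
      rw [hp j] at hq1
      obtain rfl : q = p j := (Sum.inl.inj hq1).symm
      exact (Sum.inr.inj hq2).symm
  · intro h i
    rw [Formula.realize_imp, realize_iInf_formula]
    intro hpre
    have hrep : ∀ k', ∃ mm : M, i k' = Sum.inr mm := by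
      intro k'
      have := hpre k' (Finset.mem_univ _)
      rw [Formula.realize_not, Formula.realize_rel₁, hsort] at this
      rcases hik : i k' with q | mm
      · exfalso
        apply this
        refine ⟨q, ?_⟩
        simp only [Matrix.cons_val_zero, Term.realize_var, Sum.elim_inr, id_eq]
        exact hik
      · exact ⟨mm, rfl⟩
    choose a ha using hrep
    obtain ⟨p, hpinj, hpval⟩ := h a
    rw [realize_oIExs]
    refine ⟨fun j => Sum.inl (p j), ?_⟩
    rw [Formula.realize_inf, Formula.realize_inf, realize_iInf_formula,
      realize_iInf_formula, realize_iInf_formula]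
    refine ⟨?_, ?_, ?_⟩
    · intro j _
      rw [Formula.realize_rel₁, hsort]
      exact ⟨p j, by simp⟩
    · intro q _
      rw [Formula.realize_rel₂, hproj]
      refine ⟨p q.1, by simp, ?_⟩
      simp only [Matrix.cons_val_one, Matrix.head_cons, Term.realize_var, Sum.elim_inl,
        Sum.elim_inr, id_eq]
      rw [ha q.2, hpval q.1 q.2]
      rfl
    · intro q hq
      rw [Formula.realize_not, Formula.realize_equal]
      simp only [Term.realize_var, Sum.elim_inr, id_eq]
      intro hcon
      exact (Finset.mem_filter.mp hq).2 (hpinj (Sum.inl.inj hcon))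

end Transfer


section Relativize
open Classical

variable {L : Lang} {ι : Type}

/-- Graph formula of an `L`-term inside `DLang`: the extra `Unit` variable denotes the value
of the term. -/
noncomputable def grF (ι : Type) {L : Lang} {β : Type} :
    L.Term β → (DLang L ι).Formula (β ⊕ Unit)
  | Term.var x => Term.equal (Term.var (Sum.inl x)) (Term.var (Sum.inr ()))
  | @Term.func _ _ ar f ts =>
      oIExs (id : ((β ⊕ Unit) ⊕ Fin ar) → (β ⊕ Unit) ⊕ Fin ar)
        ((oIInf (Finset.univ : Finset (Fin ar))
            (fun i => (grF ι (ts i)).relabel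
              (Sum.elim (fun b => Sum.inl (Sum.inl b)) (fun _ => Sum.inr i)))) ⊓
          (Relations.formula (L := DLang L ι) (n := ar+1) (Sum.inl f)
            (fun q : Fin (ar+1) =>
              Fin.lastCases (Term.var (Sum.inl (Sum.inr ())))
                (fun i => Term.var (Sum.inr i)) q)))

lemma realize_grF {P M : Type} [SM : L.Structure M] (π : ι → P → M) {β : Type}
    (t : L.Term β) (v : β → M) (w : P ⊕ M) :
    (@Formula.Realize (DLang L ι) (P ⊕ M) (dStructure L ι P M π) _ (grF ι t)
        (Sum.elim (fun b => Sum.inr (v b)) (fun _ => w))) ↔ w = Sum.inr (t.realize v) := by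
  letI : (DLang L ι).Structure (P ⊕ M) := dStructure L ι P M π
  induction t generalizing w with
  | var x =>
    rw [grF, Formula.realize_equal]
    simp only [Term.realize_var, Sum.elim_inl, Sum.elim_inr]
    exact eq_comm
  | func f ts ih =>
    rename_i ar
    rw [grF, realize_oIExs]
    constructor
    · rintro ⟨ws, hws⟩
      rw [Formula.realize_inf, realize_iInf_formula] at hws
      obtain ⟨h1, h2⟩ := hws
      have hvals : ∀ i, ws i = Sum.inr ((ts i).realize v) := by
        intro i
        have := h1 i (Finset.mem_univ _)
        rw [Formula.realize_relabel] at this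
        have hasg : (((fun a : (β ⊕ Unit) ⊕ Fin ar =>
              Sum.elim (Sum.elim (fun b => (Sum.inr (v b) : P ⊕ M)) fun _ => w) ws (id a)) ∘
            (Sum.elim (fun b => Sum.inl (Sum.inl b)) fun _ : Unit => Sum.inr i)) :
              β ⊕ Unit → P ⊕ M) =
            (Sum.elim (fun b => Sum.inr (v b)) fun _ : Unit => ws i) := by
          funext x
          rcases x with b | u <;> rfl
        rw [hasg] at this
        exact (ih i (ws i)).mp this
      replace h2 := Formula.realize_rel.mp h2
      obtain ⟨a, ha, hlast⟩ := (dRelMap_fun π f _).mp h2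
      simp only [Fin.lastCases_castSucc, Fin.lastCases_last, Term.realize_var,
        Sum.elim_inr, Sum.elim_inl, id_eq] at ha hlast
      have ha' : a = fun i => (ts i).realize v := funext fun i =>
        Sum.inr.inj ((ha i).symm.trans (hvals i))
      rw [hlast, ha']
      rfl
    · intro hw
      refine ⟨fun i => Sum.inr ((ts i).realize v), ?_⟩
      rw [Formula.realize_inf, realize_iInf_formula]
      constructor
      · intro i _
        rw [Formula.realize_relabel]
        have heq : (((fun a : (β ⊕ Unit) ⊕ Fin ar =>
              Sum.elim (Sum.elim (fun b => (Sum.inr (v b) : P ⊕ M)) fun _ => w)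
                (fun i => Sum.inr ((ts i).realize v)) (id a)) ∘
            (Sum.elim (fun b => Sum.inl (Sum.inl b)) fun _ : Unit => Sum.inr i)) :
              β ⊕ Unit → P ⊕ M) =
            (Sum.elim (fun b => (Sum.inr (v b) : P ⊕ M))
              (fun _ : Unit => Sum.inr ((ts i).realize v))) := by
          funext x
          rcases x with b | u
          · rfl
          · rfl
        rw [heq]
        exact (ih i _).mpr rfl
      · refine Formula.realize_rel.mpr ?_
        refine (dRelMap_fun π f _).mpr ⟨fun i => (ts i).realize v, ?_, ?_⟩
        · intro i
          simp only [Fin.lastCases_castSucc, Term.realize_var, Sum.elim_inr, id_eq]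
        · simp only [Fin.lastCases_last, Term.realize_var, Sum.elim_inl, Sum.elim_inr, id_eq]
          rw [hw]
          rfl

/-- Reinterpret a term over `Empty ⊕ Fin n` as a term over `Fin n`. -/
def sq {L : Lang} {n : ℕ} (t : L.Term (Empty ⊕ Fin n)) : L.Term (Fin n) :=
  t.relabel (Sum.elim Empty.elim id)

lemma realize_sq {M : Type} [L.Structure M] {n : ℕ} (t : L.Term (Empty ⊕ Fin n))
    (xs : Fin n → M) : (sq t).realize xs = t.realize (Sum.elim Empty.elim xs) := by
  rw [sq, Term.realize_relabel]
  congr 1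
  funext x
  rcases x with e | b
  · exact e.elim
  · rfl

lemma realize_sortAtom {P M : Type} [SM : L.Structure M] (π : ι → P → M) {α : Type}
    (u : α) (v : α → P ⊕ M) :
    (@Formula.Realize (DLang L ι) (P ⊕ M) (dStructure L ι P M π) _
      ((sortRel L ι).formula₁ (Term.var u)) v) ↔ ∃ p : P, v u = Sum.inl p := by
  letI : (DLang L ι).Structure (P ⊕ M) := dStructure L ι P M π
  rw [Formula.realize_rel₁]
  refine (dRelMap_sort π () _).trans ?_
  simp

/-- Relativization of an `L`-formula to the second sort of `DLang`-structures. -/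
noncomputable def trBF (ι : Type) {L : Lang} :
    ∀ {n : ℕ}, L.BoundedFormula Empty n → (DLang L ι).Formula (Fin n)
  | _, BoundedFormula.falsum => ⊥
  | n, BoundedFormula.equal t₁ t₂ =>
      oIExs (id : (Fin n ⊕ Unit) → Fin n ⊕ Unit)
        ((grF ι (sq t₁)) ⊓ (grF ι (sq t₂)))
  | n, @BoundedFormula.rel _ _ _ l R ts =>
      oIExs (id : (Fin n ⊕ Fin l) → Fin n ⊕ Fin l)
        ((oIInf (Finset.univ : Finset (Fin l))
          (fun i => (grF ι (sq (ts i))).relabel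
              (Sum.elim (fun b => Sum.inl b) (fun _ => Sum.inr i)))) ⊓
          ((relRel ι R).formula (fun i => Term.var (Sum.inr i))))
  | n, BoundedFormula.imp φ ψ => (trBF ι φ).imp (trBF ι ψ)
  | n, BoundedFormula.all φ =>
      oIAlls
        (fun x : Fin (n+1) =>
          (Fin.lastCases (Sum.inr ()) (fun i => Sum.inl i) x : Fin n ⊕ Unit))
        (((sortRel L ι).formula₁ (Term.var (Fin.last n))) ⊔ (trBF ι φ))

lemma realize_trBF {P M : Type} [SM : L.Structure M] (π : ι → P → M) :
    ∀ {n : ℕ} (φ : L.BoundedFormula Empty n) (xs : Fin n → M),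
    (@Formula.Realize (DLang L ι) (P ⊕ M) (dStructure L ι P M π) _ (trBF ι φ)
        (fun b => Sum.inr (xs b))) ↔ φ.Realize Empty.elim xs := by
  letI : (DLang L ι).Structure (P ⊕ M) := dStructure L ι P M π
  intro n φ
  induction φ with
  | falsum =>
    intro xs
    refine iff_of_false (by simp [trBF]) (fun h => h)
  | equal t₁ t₂ =>
    intro xs
    rw [trBF, realize_oIExs]
    constructor
    · rintro ⟨w, hw⟩
      rw [Formula.realize_inf] at hw
      obtain ⟨h1, h2⟩ := hw
      have heq : (fun a => Sum.elim (fun b => (Sum.inr (xs b) : P ⊕ M)) w (Sum.inl a)) =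
          (Sum.elim (fun b => Sum.inr (xs b)) (fun _ : Unit => w ())) ∘ Sum.inl := by
        funext x
        rfl
      have h1' := h1
      have h2' := h2
      have key1 : w () = Sum.inr ((sq t₁).realize xs) := by
        rw [← realize_grF π (sq t₁) xs (w ())]
        convert h1' using 2 <;> rfl
      have key2 : w () = Sum.inr ((sq t₂).realize xs) := by
        rw [← realize_grF π (sq t₂) xs (w ())]
        convert h2' using 2 <;> rfl
      show t₁.realize (Sum.elim Empty.elim xs) = t₂.realize (Sum.elim Empty.elim xs)
      rw [← realize_sq t₁ xs, ← realize_sq t₂ xs]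
      exact Sum.inr.inj ((key1.symm).trans key2)
    · intro h
      have h' : (sq t₁).realize xs = (sq t₂).realize xs := by
        rw [realize_sq, realize_sq]
        exact h
      refine ⟨fun _ => Sum.inr ((sq t₁).realize xs), ?_⟩
      rw [Formula.realize_inf]
      constructor
      · have := (realize_grF π (sq t₁) xs (Sum.inr ((sq t₁).realize xs))).mpr rfl
        convert this using 2 <;> rfl
      · have := (realize_grF π (sq t₂) xs (Sum.inr ((sq t₁).realize xs))).mpr
          (by rw [h'])
        convert this using 2 <;> rfl
  | rel R ts =>
    intro xs
    rw [trBF, realize_oIExs]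
    constructor
    · rintro ⟨w, hw⟩
      rw [Formula.realize_inf, realize_iInf_formula] at hw
      obtain ⟨h1, h2⟩ := hw
      have hvals : ∀ i, w i = Sum.inr ((sq (ts i)).realize xs) := by
        intro i
        have := h1 i (Finset.mem_univ _)
        rw [Formula.realize_relabel] at this
        rw [← realize_grF π (sq (ts i)) xs (w i)]
        convert this using 2
        funext x
        rcases x with b | u
        · rfl
        · rfl
      rw [Formula.realize_rel] at h2
      have h3 := (dRelMap_rel (L := L) π R _).mp h2
      obtain ⟨a, ha, hrel⟩ := h3
      have ha' : a = fun i => (sq (ts i)).realize xs := by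
        funext i
        have := (ha i).symm.trans (hvals i)
        exact Sum.inr.inj this
      show Structure.RelMap R fun i => (ts i).realize (Sum.elim Empty.elim xs)
      have : (fun i => (ts i).realize (Sum.elim Empty.elim xs)) =
          fun i => (sq (ts i)).realize xs := by
        funext i
        rw [realize_sq]
      rw [this, ← ha']
      exact hrel
    · intro h
      refine ⟨fun i => Sum.inr ((sq (ts i)).realize xs), ?_⟩
      rw [Formula.realize_inf, realize_iInf_formula]
      constructor
      · intro i _
        rw [Formula.realize_relabel]
        have := (realize_grF π (sq (ts i)) xs (Sum.inr ((sq (ts i)).realize xs))).mpr rfl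
        convert this using 2
        funext x
        rcases x with b | u
        · rfl
        · rfl
      · rw [Formula.realize_rel]
        refine (dRelMap_rel (L := L) π R _).mpr
          ⟨fun i => (sq (ts i)).realize xs, fun i => rfl, ?_⟩
        have : (fun i => (sq (ts i)).realize xs) =
            fun i => (ts i).realize (Sum.elim Empty.elim xs) := by
          funext i
          rw [realize_sq]
        rw [this]
        exact h
  | imp φ₁ φ₂ ih₁ ih₂ =>
    intro xs
    rw [trBF]
    show (Formula.Realize (trBF ι φ₁) _ → Formula.Realize (trBF ι φ₂) _) ↔ _
    rw [ih₁ xs, ih₂ xs]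
    rfl
  | all φ ih =>
    rename_i nn
    intro xs
    rw [trBF, realize_oIAlls]
    constructor
    · intro h m
      have h1 := h (fun _ => Sum.inr m)
      rw [Formula.realize_sup] at h1
      rcases h1 with h1 | h1
      · exfalso
        obtain ⟨p, hp⟩ := (realize_sortAtom π _ _).mp h1
        simp only [Fin.lastCases_last, Sum.elim_inr] at hp
        exact absurd hp (by simp)
      · refine (ih _).mp ?_
        have hasg : (fun b : Fin (nn+1) => (Sum.inr ((Fin.snoc xs m : Fin (nn+1) → M) b) : P ⊕ M)) =
            (fun a => Sum.elim (fun b => (Sum.inr (xs b) : P ⊕ M)) (fun _ : Unit => Sum.inr m)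
              (Fin.lastCases (Sum.inr ()) (fun i => Sum.inl i) a)) := by
          funext x
          induction x using Fin.lastCases with
          | last => simp [Fin.snoc_last, Fin.lastCases_last]
          | cast x' => simp [Fin.snoc_castSucc, Fin.lastCases_castSucc]
        rw [hasg]
        exact h1
    · intro h w
      rw [Formula.realize_sup]
      rcases hw : w () with p | m
      · left
        refine (realize_sortAtom π _ _).mpr ⟨p, ?_⟩
        simp only [Fin.lastCases_last, Sum.elim_inr]
        exact hw
      · right
        have h2 := (ih (Fin.snoc xs m)).mpr (h m)
        have hasg : (fun a => Sum.elim (fun b => (Sum.inr (xs b) : P ⊕ M)) w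
            (Fin.lastCases (Sum.inr ()) (fun i => Sum.inl i) a)) =
            (fun b : Fin (nn+1) => (Sum.inr ((Fin.snoc xs m : Fin (nn+1) → M) b) : P ⊕ M)) := by
          funext x
          induction x using Fin.lastCases with
          | last => simp [Fin.snoc_last, Fin.lastCases_last, hw]
          | cast x' => simp [Fin.snoc_castSucc, Fin.lastCases_castSucc]
        rw [hasg]
        exact h2

/-- Relativization at the level of sentences. -/
noncomputable def trSent (ι : Type) {L : Lang} (φ : L.Sentence) : (DLang L ι).Sentence :=
  (trBF ι φ).relabel Fin.elim0

lemma realize_trSent {P M : Type} [SM : L.Structure M] (π : ι → P → M) (φ : L.Sentence) :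
    (@Sentence.Realize (DLang L ι) (P ⊕ M) (dStructure L ι P M π) (trSent ι φ)) ↔ M ⊨ φ := by
  letI : (DLang L ι).Structure (P ⊕ M) := dStructure L ι P M π
  rw [Sentence.Realize, trSent, Formula.realize_relabel]
  have h1 : ((default : Empty → P ⊕ M) ∘ Fin.elim0) =
      (fun b : Fin 0 => Sum.inr ((Fin.elim0 : Fin 0 → M) b)) := funext fun b => b.elim0
  rw [h1, realize_trBF π φ Fin.elim0]
  show BoundedFormula.Realize φ Empty.elim Fin.elim0 ↔
    BoundedFormula.Realize φ default default
  rw [show (Empty.elim : Empty → M) = default from funext fun e => e.elim,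
    show (Fin.elim0 : Fin 0 → M) = default from funext fun b => b.elim0]

end Relativize


/-- Let `T` be a complete theory in `L` and `κ = #ι` an infinite cardinal.
A two-sorted structure `(P, 𝔐, (π_i)_{i : ι})` (coded as the one-sorted structure
`dStructure L ι P M π` on `P ⊕ M`) is a model of `D^κ(T)` — the complete theory of the
canonical structure `(M₀^ι, 𝔐₀, (π_i))` over any model `𝔐₀ ⊨ T` — if and only if `𝔐 ⊨ T`
and the genericity axioms hold.  In particular the class of such structures is the class of
models of the complete theory `D^κ(T)`, and every such structure is elementarily equivalent
to `(M₀^ι, 𝔐₀, (π_i))`. -/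
theorem statement1 (L : Lang) (T : L.Theory) (hT : T.IsComplete)
    (ι : Type) (hι : Infinite ι)
    (M₀ : Type) (S₀ : L.Structure M₀) (hM₀inf : Infinite M₀)
    (hM₀ : @Theory.Model L M₀ S₀ T)
    (P M : Type) (SM : L.Structure M) (π : ι → P → M) :
    @Theory.Model (DLang L ι) (P ⊕ M) (@dStructure L ι P M SM π) (@DTheory L ι M₀ S₀)
      ↔ (@Theory.Model L M SM T ∧ Generic π) := by
  classical
  letI : (DLang L ι).Structure (P ⊕ M) := @dStructure L ι P M SM π
  letI : (DLang L ι).Structure ((ι → M₀) ⊕ M₀) := canonD L ι M₀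
  haveI : Nonempty M₀ := inferInstance
  haveI : Nonempty ι := inferInstance
  constructor
  · intro hmod
    have htrans : ∀ χ : (DLang L ι).Sentence,
        (@Sentence.Realize _ _ (canonD L ι M₀) χ) →
        (@Sentence.Realize _ _ (@dStructure L ι P M SM π) χ) := by
      intro χ hχ
      exact hmod.realize_of_mem χ hχ
    constructor
    · refine ⟨fun φ hφ => ?_⟩
      have h0 : @Sentence.Realize L M₀ S₀ φ := hM₀.realize_of_mem φ hφ
      have h1 : @Sentence.Realize _ _ (canonD L ι M₀) (trSent ι φ) :=
        (realize_trSent (P := ι → M₀) (SM := S₀) (fun i x => x i) φ).mpr h0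
      exact (realize_trSent (SM := SM) π φ).mp (htrans _ h1)
    · rw [generic_iff_tuple]
      intro k m idx hinj
      have hcan : Generic (fun (i : ι) (x : ι → M₀) => x i) := canonGeneric ι M₀
      have h1 : @Sentence.Realize _ _ (canonD L ι M₀) (genSent L k m idx) :=
        (realize_genSent (P := ι → M₀) (SM := S₀) (fun i x => x i) k m idx).mpr
          ((generic_iff_tuple _).mp hcan k m idx hinj)
      exact (realize_genSent (SM := SM) π k m idx).mp (htrans _ h1)
  · rintro ⟨hMT, hgen⟩
    haveI hne : Nonempty M := by
      obtain ⟨S, hS, hSv⟩ := hgen 0 Fin.elim0 (fun a _ _ => a.elim0) Fin.elim0 1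
      obtain ⟨p, hp⟩ := Finset.card_pos.mp (lt_of_lt_of_le Nat.zero_lt_one hS)
      exact ⟨π (Classical.arbitrary ι) p⟩
    haveI hMT' : @Theory.Model L M SM T := hMT
    haveI hM₀' : @Theory.Model L M₀ S₀ T := hM₀
    refine ⟨fun χ hχ => ?_⟩
    have hB : @Sentence.Realize _ _ (canonD L ι M₀) χ := hχ
    obtain ⟨k, idx, hinj, hsupp⟩ := exists_supp (χ : (DLang L ι).BoundedFormula Empty 0)
    obtain ⟨Ψ, hinv, hmain⟩ := key L ι idx hinj χ hsupp
    have es : Slot k 0 → Empty :=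
      fun x => Sum.elim (fun jb => jb.2.elim0) (fun b => b.elim0) x
    set σ : L.Sentence :=
      (Ψ (Fin.elim0 : Fin 0 → Bool) (fun x _ => x.elim0)).relabel es with hσ
    have hsig : ∀ (M' : Type) (SM' : L.Structure M') (d : Slot k 0 → M'),
        (@Formula.Realize L M' SM' _
          (Ψ (Fin.elim0 : Fin 0 → Bool) (fun x _ => x.elim0)) d) ↔
        (@Sentence.Realize L M' SM' σ) := by
      intro M' SM' d
      rw [hσ, Sentence.Realize, Formula.realize_relabel,
        show ((default : Empty → M') ∘ es) = d from funext fun x => (es x).elim]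
    have hpat : ∀ (P' M' : Type) (xs : Fin 0 → P' ⊕ M'),
        spat xs = (Fin.elim0 : Fin 0 → Bool) ∧
        epat xs = (fun x _ => (x.elim0 : Prop)) :=
      fun P' M' xs => ⟨funext fun b => b.elim0, funext fun b => b.elim0⟩
    have hsentBF : ∀ (A : Type) (SA : (DLang L ι).Structure A),
        (@Sentence.Realize (DLang L ι) A SA χ) ↔
        (@BoundedFormula.Realize (DLang L ι) A SA Empty 0 χ Empty.elim Fin.elim0) := by
      intro A SA
      rw [Sentence.Realize, Formula.Realize,
        show (default : Empty → A) = Empty.elim from funext fun e => e.elim,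
        show (default : Fin 0 → A) = Fin.elim0 from funext fun b => b.elim0]
    -- A-side equivalence
    have hA : (@Sentence.Realize _ _ (@dStructure L ι P M SM π) χ) ↔
        (@Sentence.Realize L M SM σ) := by
      rw [hsentBF (P ⊕ M) (@dStructure L ι P M SM π)]
      have h1 := hmain P M π hgen Fin.elim0
      rw [(hpat P M Fin.elim0).1, (hpat P M Fin.elim0).2] at h1
      exact h1.trans (hsig M SM _)
    -- B-side equivalence
    have hBiff : (@Sentence.Realize _ _ (canonD L ι M₀) χ) ↔
        (@Sentence.Realize L M₀ S₀ σ) := by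
      rw [hsentBF ((ι → M₀) ⊕ M₀) (canonD L ι M₀)]
      have h1 := hmain (ι → M₀) M₀ (fun i x => x i) (canonGeneric ι M₀) Fin.elim0
      rw [(hpat (ι → M₀) M₀ Fin.elim0).1, (hpat (ι → M₀) M₀ Fin.elim0).2] at h1
      exact h1.trans (hsig M₀ S₀ _)
    -- bridge via completeness of T
    have hMσ : (@Sentence.Realize L M SM σ) ↔ (@Sentence.Realize L M₀ S₀ σ) := by
      have hc1 := hT.realize_sentence_iff σ M
      have hc2 := hT.realize_sentence_iff σ M₀
      rw [hc1, hc2]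
    exact hA.mpr (hMσ.mpr (hBiff.mp hB))


end TracePaper
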